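/- Let f : ℝ² → ℝ be differentiable and nowhere zero, and let a : ℝ² → ℝ satisfy f(p)·(∂f/∂p_i)(p) = −a(p)·p_i for i = 1,2 and all p ∈ ℝ². Define J : ℝ² × ℝ² → ℝ by J(q,p) = (q₁p₂ − q₂p₁)/f(p), and at each point x = (q,p) define the vector ρ(x) = (q₂, −q₁, p₂, −p₁) ∈ ℝ⁴ and the 4×4 matrix Ω(x) = (1/f(p)) · [[0,0,−1,0],[0,0,0,−1],[1,0,0,(a(p)/f(p))·J(x)],[0,1,−(a(p)/f(p))·J(x),0]]. Then for every x ∈ ℝ² × ℝ² and every w ∈ ℝ⁴, the Fréchet derivative of J satisfies DJ(x)(w) = ρ(x)ᵀ · Ω(x) · w. That is, the interior product of the infinitesimal rotation vector field with the deformed symplectic form equals dJ, so J is a momentum map for the SO(2)-action. -/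

import Mathlib

open Matrix

/-- Deformed angular momentum `J(q,p) = (q₁p₂ − q₂p₁)/f(p)` on the phase space `ℝ⁴` with
coordinates `(q₁,q₂,p₁,p₂)`. -/
noncomputable def J2fun (f : (Fin 2 → ℝ) → ℝ) (x : Fin 4 → ℝ) : ℝ :=
  (x 0 * x 3 - x 1 * x 2) / f ![x 2, x 3]

/-- Matrix of the deformed symplectic form of the two-dimensional rotationally invariant GUP
theory in the coordinates `(q₁,q₂,p₁,p₂)`. -/
noncomputable def Omega2 (f a : (Fin 2 → ℝ) → ℝ) (x : Fin 4 → ℝ) : Matrix (Fin 4) (Fin 4) ℝ :=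
  (f ![x 2, x 3])⁻¹ •
    !![0, 0, -1, 0;
       0, 0, 0, -1;
       1, 0, 0, (a ![x 2, x 3] / f ![x 2, x 3]) * J2fun f x;
       0, 1, -((a ![x 2, x 3] / f ![x 2, x 3]) * J2fun f x), 0]

/-- Generator `ρ = q₂∂_{q₁} − q₁∂_{q₂} + p₂∂_{p₁} − p₁∂_{p₂}` of the diagonal
`SO(2)`-action on the phase space `ℝ⁴`. -/
def rho2 (x : Fin 4 → ℝ) : Fin 4 → ℝ := ![x 1, -x 0, x 3, -x 2]

/-- If `f` is differentiable and nowhere zero and `f·∂f/∂p_i = −a·p_i` (closure condition),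
then the Fréchet derivative of `J` satisfies `DJ(x)(w) = ρ(x)ᵀ·Ω(x)·w`: the interior product
of the infinitesimal rotation vector field with the deformed symplectic form equals `dJ`, so
`J` is a momentum map for the `SO(2)`-action. -/
theorem stmt_12 (f : (Fin 2 → ℝ) → ℝ) (hf : Differentiable ℝ f)
    (hf0 : ∀ p, f p ≠ 0) (a : (Fin 2 → ℝ) → ℝ)
    (hfa : ∀ (p : Fin 2 → ℝ) (i : Fin 2),
      f p * fderiv ℝ f p (Pi.single i 1) = -(a p * p i)) :
    ∀ x w : Fin 4 → ℝ,
      fderiv ℝ (J2fun f) x w = rho2 x ⬝ᵥ (Omega2 f a x).mulVec w := by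
  intro x w
  set p : Fin 2 → ℝ := ![x 2, x 3] with hp
  -- the map y ↦ ![y 2, y 3] as a CLM
  set L : (Fin 4 → ℝ) →L[ℝ] (Fin 2 → ℝ) :=
    ContinuousLinearMap.pi ![ContinuousLinearMap.proj 2, ContinuousLinearMap.proj 3] with hLdef
  have hLfun : ∀ y : Fin 4 → ℝ, L y = ![y 2, y 3] := by
    intro y; funext i; fin_cases i <;> simp [hLdef]
  have hL : HasFDerivAt (fun y : Fin 4 → ℝ => (![y 2, y 3] : Fin 2 → ℝ)) L x := by
    have := L.hasFDerivAt (x := x)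
    simpa [funext hLfun] using this
  have hfh : HasFDerivAt (fun y : Fin 4 → ℝ => f ![y 2, y 3])
      ((fderiv ℝ f p).comp L) x := by
    have h2 : HasFDerivAt (f ∘ fun y : Fin 4 → ℝ => (![y 2, y 3] : Fin 2 → ℝ))
        ((fderiv ℝ f p).comp L) x := HasFDerivAt.comp (𝕜 := ℝ) x ((hf p).hasFDerivAt) hL
    exact h2
  have hg : HasFDerivAt (fun y : Fin 4 → ℝ => y 0 * y 3 - y 1 * y 2)
      (((x 0 • ContinuousLinearMap.proj 3 + x 3 • ContinuousLinearMap.proj 0) -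
       (x 1 • ContinuousLinearMap.proj 2 + x 2 • ContinuousLinearMap.proj 1) :
        (Fin 4 → ℝ) →L[ℝ] ℝ)) x := by
    exact ((ContinuousLinearMap.proj (R := ℝ) (φ := fun _ : Fin 4 => ℝ) 0).hasFDerivAt.mul
      (ContinuousLinearMap.proj 3).hasFDerivAt).sub
      ((ContinuousLinearMap.proj 1).hasFDerivAt.mul (ContinuousLinearMap.proj 2).hasFDerivAt)
  have hinv : HasFDerivAt (fun y : Fin 4 → ℝ => (f ![y 2, y 3])⁻¹)
      ((-ContinuousLinearMap.mulLeftRight ℝ ℝ (f p)⁻¹ (f p)⁻¹).comp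
        ((fderiv ℝ f p).comp L)) x := by
    have h3 : HasFDerivAt (Inv.inv ∘ fun y : Fin 4 → ℝ => f ![y 2, y 3])
        ((-ContinuousLinearMap.mulLeftRight ℝ ℝ (f p)⁻¹ (f p)⁻¹).comp
          ((fderiv ℝ f p).comp L)) x :=
      HasFDerivAt.comp (𝕜 := ℝ) x (hasFDerivAt_inv' (𝕜 := ℝ) (hf0 p)) hfh
    exact h3
  have hJfun : J2fun f = fun y : Fin 4 → ℝ =>
      (y 0 * y 3 - y 1 * y 2) * (f ![y 2, y 3])⁻¹ := by
    funext y; rw [J2fun, div_eq_mul_inv]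
  have hJ : HasFDerivAt (fun y : Fin 4 → ℝ =>
      (y 0 * y 3 - y 1 * y 2) * (f ![y 2, y 3])⁻¹) _ x := hg.mul hinv
  rw [hJfun, hJ.fderiv]
  have hv : L w = w 2 • (Pi.single 0 1 : Fin 2 → ℝ) + w 3 • (Pi.single 1 1 : Fin 2 → ℝ) := by
    rw [hLfun]; funext i; fin_cases i <;> simp
  have hD0 : fderiv ℝ f p (Pi.single 0 1) = -(a p * x 2) / f p := by
    rw [eq_div_iff (hf0 p), mul_comm]
    simpa [hp] using hfa p 0
  have hD1 : fderiv ℝ f p (Pi.single 1 1) = -(a p * x 3) / f p := by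
    rw [eq_div_iff (hf0 p), mul_comm]
    simpa [hp] using hfa p 1
  have hDf : (fderiv ℝ f p) (L w) = w 2 * (-(a p * x 2) / f p) + w 3 * (-(a p * x 3) / f p) := by
    rw [hv, map_add, _root_.map_smul, _root_.map_smul, smul_eq_mul, smul_eq_mul, hD0, hD1]
  simp only [ContinuousLinearMap.coe_sub', Pi.sub_apply, ContinuousLinearMap.coe_smul',
    Pi.smul_apply, ContinuousLinearMap.add_apply, ContinuousLinearMap.proj_apply,
    ContinuousLinearMap.comp_apply, hDf, smul_eq_mul, ContinuousLinearMap.neg_apply,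
    ContinuousLinearMap.mulLeftRight_apply]
  simp only [rho2, Omega2, J2fun, Matrix.mulVec, dotProduct, Fin.sum_univ_four,
    Matrix.smul_apply, Matrix.cons_val', Matrix.cons_val_zero, Matrix.cons_val_one,
    Matrix.head_cons, Matrix.empty_val', Matrix.cons_val_fin_one, Matrix.head_fin_const,
    Matrix.of_apply, smul_eq_mul, Matrix.cons_val_two, Matrix.cons_val_three, Matrix.tail_cons,
    ← hp]
  field_simp
  ring
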